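/- Let n ∈ ℕ with n > 1, let 0 < γ ≤ 1/2 and 0 ≤ λ ≤ (n−1)/2, and suppose γ = 1/2 or λ = (n−1)γ. Let W = {(x,y) ∈ ℝ² : x > 0, y ≥ 0, 2x + (n−1)y = 1}, which is invariant under the normalised simplified operator S̃V_{n,γ,λ}. Then for every initial point s = (x⁽⁰⁾,y⁽⁰⁾) ∈ W the sequence S̃V_{n,γ,λ}^k(s) converges as k → ∞, and: (i) if γ ≠ 1/2 (hence λ = (n−1)γ), the limit is (γ, (1−2γ)/(n−1)); (ii) if γ = 1/2 and λ ≥ (n−1)/4, the limit is (1/2, 0); (iii) if γ = 1/2 and λ < (n−1)/4, the limit is (1/2, 0) when s = (1/2, 0), and is ( 2λ/(n−1), (n−1−4λ)/(n−1)² ) otherwise. -/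

import Mathlib

open Filter

/-- The normalised simplified gonosomal operator `S̃V_{n,γ,λ}`. -/
noncomputable def nsvOp (n : ℕ) (γ l : ℝ) (p : ℝ × ℝ) : ℝ × ℝ :=
  ((γ * p.1 + l * p.2) / (p.1 + ((n : ℝ) - 1) * p.2),
   ((1 - 2 * γ) * p.1 + ((n : ℝ) - 1 - 2 * l) * p.2) /
     (((n : ℝ) - 1) * (p.1 + ((n : ℝ) - 1) * p.2)))

/-- 1D reduction of the operator on the invariant set, when `γ = 1/2`. -/
noncomputable def svAux (a x : ℝ) : ℝ := ((1/2 - 2*a)*x + a)/(1 - x)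

lemma fix_of_tendsto {g : ℝ → ℝ} {x : ℕ → ℝ} {L : ℝ}
    (hg : ContinuousAt g L) (hx : ∀ k, x (k+1) = g (x k))
    (hL : Tendsto x atTop (nhds L)) : g L = L := by
  have h1 : Tendsto (fun k => x (k+1)) atTop (nhds L) :=
    hL.comp (tendsto_add_atTop_nat 1)
  have h2 : Tendsto (fun k => x (k+1)) atTop (nhds (g L)) :=
    (hg.tendsto.comp hL).congr fun k => (hx k).symm
  exact tendsto_nhds_unique h2 h1

set_option maxHeartbeats 1600000 in
theorem nsvOp_limits (n : ℕ) (hn : 1 < n) (γ l : ℝ)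
    (hγ0 : 0 < γ) (hγ1 : γ ≤ 1 / 2) (hl0 : 0 ≤ l) (hl1 : l ≤ ((n : ℝ) - 1) / 2)
    (hcase : γ = 1 / 2 ∨ l = ((n : ℝ) - 1) * γ)
    (s : ℝ × ℝ) (hs : 0 < s.1 ∧ 0 ≤ s.2 ∧ 2 * s.1 + ((n : ℝ) - 1) * s.2 = 1) :
    (∃ L : ℝ × ℝ, Filter.Tendsto (fun k => (nsvOp n γ l)^[k] s) Filter.atTop (nhds L)) ∧
    (γ ≠ 1 / 2 →
      Filter.Tendsto (fun k => (nsvOp n γ l)^[k] s) Filter.atTop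
        (nhds (γ, (1 - 2 * γ) / ((n : ℝ) - 1)))) ∧
    (γ = 1 / 2 →
      (((n : ℝ) - 1) / 4 ≤ l →
        Filter.Tendsto (fun k => (nsvOp n γ l)^[k] s) Filter.atTop
          (nhds ((1 : ℝ) / 2, (0 : ℝ)))) ∧
      (l < ((n : ℝ) - 1) / 4 →
        (s = ((1 : ℝ) / 2, (0 : ℝ)) →
          Filter.Tendsto (fun k => (nsvOp n γ l)^[k] s) Filter.atTop
            (nhds ((1 : ℝ) / 2, (0 : ℝ)))) ∧
        (s ≠ ((1 : ℝ) / 2, (0 : ℝ)) →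
          Filter.Tendsto (fun k => (nsvOp n γ l)^[k] s) Filter.atTop
            (nhds (2 * l / ((n : ℝ) - 1),
              ((n : ℝ) - 1 - 4 * l) / ((n : ℝ) - 1) ^ 2))))) := by
  obtain ⟨x, y⟩ := s
  obtain ⟨hx0, hy0, hsum⟩ := hs
  simp only [Prod.fst, Prod.snd] at hx0 hy0 hsum
  have hn2 : (2:ℝ) ≤ (n:ℝ) := by exact_mod_cast hn
  set N : ℝ := (n:ℝ) - 1 with hNdef
  have hN : 0 < N := by rw [hNdef]; linarith
  have hNne : N ≠ 0 := ne_of_gt hN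
  have hxhalf : x ≤ 1/2 := by nlinarith [mul_nonneg hN.le hy0]
  have hy_eq : y = (1 - 2*x)/N := by field_simp; linarith
  by_cases hγ : γ = 1/2
  · -- Scenario B : γ = 1/2
    subst hγ
    set a : ℝ := l / N with hadef
    have ha0 : 0 ≤ a := div_nonneg hl0 hN.le
    have ha1 : a ≤ 1/2 := by rw [hadef, div_le_iff₀ hN]; linarith
    have hauxpos : ∀ z : ℝ, 0 < z → z ≤ 1/2 → 0 < svAux a z := by
      intro z h1 h2
      apply div_pos _ (by linarith)
      nlinarith [mul_nonneg ha0 (by linarith : (0:ℝ) ≤ 1 - 2*z)]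
    have hauxle : ∀ z : ℝ, 0 < z → z ≤ 1/2 → svAux a z ≤ 1/2 := by
      intro z h1 h2
      rw [svAux, div_le_iff₀ (by linarith : (0:ℝ) < 1 - z)]
      nlinarith [mul_nonneg (by linarith : (0:ℝ) ≤ 1 - 2*a) (by linarith : (0:ℝ) ≤ 1 - 2*z)]
    have hstep : ∀ z : ℝ, 0 < z → z ≤ 1/2 →
        nsvOp n (1/2) l (z, (1 - 2*z)/N) = (svAux a z, (1 - 2*svAux a z)/N) := by
      intro z h1 h2
      have h3 : (1:ℝ) - z ≠ 0 := ne_of_gt (by linarith)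
      have hden : z + N*((1-2*z)/N) = 1 - z := by field_simp; ring
      rw [nsvOp, svAux]
      simp only [← hNdef, Prod.fst, Prod.snd]
      rw [hden, Prod.mk.injEq]
      constructor
      · rw [div_eq_div_iff h3 h3, hadef]
        field_simp
        ring
      · rw [hadef]
        field_simp
        ring
    set u : ℕ → ℝ := fun k => (svAux a)^[k] x with hudef
    have hu0 : u 0 = x := rfl
    have husucc : ∀ k, u (k+1) = svAux a (u k) := fun k =>
      Function.iterate_succ_apply' _ _ _
    have key : ∀ k, 0 < u k ∧ u k ≤ 1/2 ∧
        (nsvOp n (1/2) l)^[k] (x, y) = (u k, (1 - 2*u k)/N) := by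
      intro k
      induction k with
      | zero =>
        refine ⟨hx0, hxhalf, ?_⟩
        rw [Function.iterate_zero_apply, hu0, ← hy_eq]
      | succ k ih =>
        refine ⟨by rw [husucc]; exact hauxpos _ ih.1 ih.2.1,
          by rw [husucc]; exact hauxle _ ih.1 ih.2.1, ?_⟩
        rw [Function.iterate_succ_apply', ih.2.2, hstep _ ih.1 ih.2.1, husucc]
    have mk_tendsto : ∀ L : ℝ, Tendsto u atTop (nhds L) →
        Tendsto (fun k => (nsvOp n (1/2) l)^[k] (x, y)) atTop (nhds (L, (1-2*L)/N)) := by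
      intro L hL
      have h2 : Tendsto (fun k => (1 - 2*u k)/N) atTop (nhds ((1-2*L)/N)) :=
        (tendsto_const_nhds.sub (hL.const_mul 2)).div_const N
      exact ((hL.prodMk_nhds h2).congr fun k => ((key k).2.2).symm)
    have hquad : ∀ L : ℝ, L ≤ 1/2 → Tendsto u atTop (nhds L) →
        (L - 1/2)*(L - 2*a) = 0 := by
      intro L hL12 hL
      have hne : (1:ℝ) - L ≠ 0 := ne_of_gt (by linarith)
      have hcont : ContinuousAt (svAux a) L := by
        rw [show svAux a = fun z => ((1/2 - 2*a)*z + a)/(1 - z) from rfl]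
        exact ContinuousAt.div (by fun_prop) (by fun_prop) hne
      have hfix := fix_of_tendsto hcont husucc hL
      rw [svAux, div_eq_iff hne] at hfix
      linear_combination hfix
    by_cases hshalf : x = 1/2
    · -- fixed point (1/2, 0)
      have hy00 : y = 0 := by rw [hy_eq, hshalf]; ring
      have hufix : ∀ k, u k = 1/2 := by
        intro k
        induction k with
        | zero => rw [hu0, hshalf]
        | succ k ih =>
          rw [husucc, ih, svAux, div_eq_iff (by norm_num : (1:ℝ) - 1/2 ≠ 0)]
          ring
      have hT : Tendsto (fun k => (nsvOp n (1/2) l)^[k] (x, y)) atTop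
          (nhds ((1:ℝ)/2, (0:ℝ))) := by
        have h := mk_tendsto (1/2) (by
          rw [show u = fun _ => (1:ℝ)/2 from funext hufix]; exact tendsto_const_nhds)
        have heq : (((1:ℝ)/2 : ℝ), ((1:ℝ) - 2*(1/2))/N) = ((1:ℝ)/2, (0:ℝ)) := by norm_num
        rwa [heq] at h
      refine ⟨⟨_, hT⟩, fun h => absurd rfl h, fun _ => ⟨fun _ => hT, fun _ =>
        ⟨fun _ => hT, fun hne => absurd ?_ hne⟩⟩⟩
      rw [hshalf, hy00]
    · have hslt : x < 1/2 := lt_of_le_of_ne hxhalf hshalf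
      by_cases hal : N/4 ≤ l
      · -- a ≥ 1/4 : increasing to 1/2
        have ha4 : 1/4 ≤ a := by rw [hadef, le_div_iff₀ hN]; linarith
        have hmono : Monotone u := by
          apply monotone_nat_of_le_succ
          intro k
          obtain ⟨h1, h2, -⟩ := key k
          rw [husucc, svAux, le_div_iff₀ (by linarith : (0:ℝ) < 1 - u k)]
          nlinarith [mul_nonneg (by linarith : (0:ℝ) ≤ 1/2 - u k)
            (by linarith : (0:ℝ) ≤ 2*a - u k)]
        have hbdd : BddAbove (Set.range u) := ⟨1/2, by
          rintro _ ⟨k, rfl⟩; exact (key k).2.1⟩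
        have hconv : Tendsto u atTop (nhds (⨆ k, u k)) := tendsto_atTop_ciSup hmono hbdd
        have hLle : (⨆ k, u k) ≤ 1/2 := ciSup_le fun k => (key k).2.1
        have hq := hquad _ hLle hconv
        have hL12 : (⨆ k, u k) = 1/2 := by
          rcases mul_eq_zero.mp hq with h | h
          · linarith
          · linarith
        rw [hL12] at hconv
        have hT : Tendsto (fun k => (nsvOp n (1/2) l)^[k] (x, y)) atTop
            (nhds ((1:ℝ)/2, (0:ℝ))) := by
          have h := mk_tendsto _ hconv
          have heq : (((1:ℝ)/2 : ℝ), ((1:ℝ) - 2*(1/2))/N) = ((1:ℝ)/2, (0:ℝ)) := by norm_num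
          rwa [heq] at h
        exact ⟨⟨_, hT⟩, fun h => absurd rfl h, fun _ => ⟨fun _ => hT,
          fun h => absurd h (not_lt.mpr hal)⟩⟩
      · push_neg at hal
        have ha4 : a < 1/4 := by rw [hadef, div_lt_iff₀ hN]; linarith
        have hfix2a : svAux a (2*a) = 2*a := by
          rw [svAux, div_eq_iff (by linarith : (1:ℝ) - 2*a ≠ 0)]
          ring
        have hTu : Tendsto u atTop (nhds (2*a)) := by
          rcases lt_trichotomy x (2*a) with hc | hc | hc
          · -- increasing up to 2a
            have hub : ∀ k, u k ≤ 2*a := by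
              intro k
              induction k with
              | zero => rw [hu0]; exact hc.le
              | succ k ih =>
                obtain ⟨h1, -, -⟩ := key k
                rw [husucc, svAux, div_le_iff₀ (by linarith : (0:ℝ) < 1 - u k)]
                nlinarith
            have hmono : Monotone u := by
              apply monotone_nat_of_le_succ
              intro k
              obtain ⟨h1, h2, -⟩ := key k
              rw [husucc, svAux, le_div_iff₀ (by linarith : (0:ℝ) < 1 - u k)]
              nlinarith [mul_nonneg (by linarith : (0:ℝ) ≤ 1/2 - u k)
                (by linarith [hub k] : (0:ℝ) ≤ 2*a - u k)]
            have hbdd : BddAbove (Set.range u) := ⟨1/2, by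
              rintro _ ⟨k, rfl⟩; exact (key k).2.1⟩
            have hconv : Tendsto u atTop (nhds (⨆ k, u k)) := tendsto_atTop_ciSup hmono hbdd
            have hLle : (⨆ k, u k) ≤ 2*a := ciSup_le hub
            have hq := hquad _ (by linarith) hconv
            have : (⨆ k, u k) = 2*a := by
              rcases mul_eq_zero.mp hq with h | h
              · linarith
              · linarith
            rwa [this] at hconv
          · -- constant
            have hcst : ∀ k, u k = 2*a := by
              intro k
              induction k with
              | zero => rw [hu0, hc]
              | succ k ih => rw [husucc, ih, hfix2a]
            rw [show u = fun _ => 2*a from funext hcst]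
            exact tendsto_const_nhds
          · -- decreasing down to 2a
            have hlb : ∀ k, 2*a ≤ u k := by
              intro k
              induction k with
              | zero => rw [hu0]; exact hc.le
              | succ k ih =>
                obtain ⟨h1, h2, -⟩ := key k
                rw [husucc, svAux, le_div_iff₀ (by linarith : (0:ℝ) < 1 - u k)]
                nlinarith
            have hanti : Antitone u := by
              apply antitone_nat_of_succ_le
              intro k
              obtain ⟨h1, h2, -⟩ := key k
              rw [husucc, svAux, div_le_iff₀ (by linarith : (0:ℝ) < 1 - u k)]
              nlinarith [mul_nonneg (by linarith : (0:ℝ) ≤ 1/2 - u k)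
                (by linarith [hlb k] : (0:ℝ) ≤ u k - 2*a)]
            have hbdd : BddBelow (Set.range u) := ⟨2*a, by
              rintro _ ⟨k, rfl⟩; exact hlb k⟩
            have hconv : Tendsto u atTop (nhds (⨅ k, u k)) := tendsto_atTop_ciInf hanti hbdd
            have hLle : (⨅ k, u k) ≤ x := by
              have := ciInf_le ⟨2*a, by rintro _ ⟨k, rfl⟩; exact hlb k⟩ 0
              rwa [hu0] at this
            have hLge : 2*a ≤ (⨅ k, u k) := le_ciInf hlb
            have hq := hquad _ (by linarith) hconv
            have : (⨅ k, u k) = 2*a := by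
              rcases mul_eq_zero.mp hq with h | h
              · linarith
              · linarith
            rwa [this] at hconv
        have hT : Tendsto (fun k => (nsvOp n (1/2) l)^[k] (x, y)) atTop
            (nhds (2*l/N, (N - 4*l)/N^2)) := by
          have h := mk_tendsto _ hTu
          have heq : ((2*a : ℝ), (1-2*(2*a))/N) = (2*l/N, (N - 4*l)/N^2) := by
            rw [hadef, Prod.mk.injEq]
            constructor
            · ring
            · field_simp
              ring
          rwa [heq] at h
        refine ⟨⟨_, hT⟩, fun h => absurd rfl h, fun _ =>
          ⟨fun h => absurd h (not_le.mpr hal), fun _ => ⟨fun h => ?_, fun _ => hT⟩⟩⟩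
        rw [Prod.mk.injEq] at h
        exact absurd h.1 hshalf
  · -- Scenario A : l = N γ
    have hlA : l = N * γ := hcase.resolve_left hγ
    have stepA : ∀ p : ℝ × ℝ, 0 < p.1 → 0 ≤ p.2 → 2*p.1 + N*p.2 = 1 →
        nsvOp n γ l p = (γ, (1-2*γ)/N) := by
      rintro ⟨px, py⟩ hp1 hp2 hp3
      simp only [Prod.fst, Prod.snd] at hp1 hp2 hp3
      have hpx : px ≤ 1/2 := by nlinarith [mul_nonneg hN.le hp2]
      have hdne : px + N*py ≠ 0 := by
        have : px + N*py = 1 - px := by linarith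
        rw [this]; linarith
      rw [nsvOp]
      simp only [← hNdef, Prod.fst, Prod.snd, Prod.mk.injEq]
      constructor
      · rw [div_eq_iff hdne, hlA]; ring
      · rw [div_eq_div_iff (mul_ne_zero hNne hdne) hNne, hlA]; ring
    have hQ2 : (0:ℝ) ≤ (1-2*γ)/N := div_nonneg (by linarith) hN.le
    have hQ3 : 2*γ + N*((1-2*γ)/N) = 1 := by field_simp; ring
    have hiterA : ∀ k, (nsvOp n γ l)^[k+1] (x, y) = (γ, (1-2*γ)/N) := by
      intro k
      induction k with
      | zero => simpa using stepA (x, y) hx0 hy0 hsum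
      | succ k ih =>
        rw [Function.iterate_succ_apply', ih]
        exact stepA _ hγ0 hQ2 hQ3
    have hT : Tendsto (fun k => (nsvOp n γ l)^[k] (x, y)) atTop
        (nhds (γ, (1-2*γ)/N)) := by
      apply Tendsto.congr' _ (tendsto_const_nhds (x := ((γ : ℝ), (1-2*γ)/N)))
      filter_upwards [eventually_ge_atTop 1] with k hk
      obtain ⟨m, rfl⟩ := Nat.exists_eq_add_of_le hk
      rw [add_comm]
      exact (hiterA m).symm
    exact ⟨⟨_, hT⟩, fun _ => hT, fun h => absurd h hγ⟩
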